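/- A graph G has an orientation with d⁺_D(v) ≤ k(v) for every vertex v if and only if for every subgraph H of G, |E(H)| ≤ Σ_{v ∈ V(H)} k(v). In particular, every outerplanar graph has an orientation with maximum out-degree at most 2. -/

import Mathlib

variable {V : Type*} [Fintype V] [DecidableEq V]

/-- Out-degree of `v` in the digraph (arc set) `D`. -/
def outDeg (D : Finset (V × V)) (v : V) : ℕ := (D.filter fun a => a.1 = v).card

/-- In-degree of `v` in the digraph (arc set) `D`. -/
def inDeg (D : Finset (V × V)) (v : V) : ℕ := (D.filter fun a => a.2 = v).card

/-- An arc set is Eulerian if every vertex has equal in- and out-degree. -/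
def IsEulerian (H : Finset (V × V)) : Prop := ∀ v, outDeg H v = inDeg H v

instance (H : Finset (V × V)) : Decidable (IsEulerian H) := by
  unfold IsEulerian; infer_instance

/-- The Eulerian subdigraphs of `D`. -/
def eulerianSubs (D : Finset (V × V)) : Finset (Finset (V × V)) :=
  D.powerset.filter IsEulerian

/-- `D` is an AT-orientation: the number of even Eulerian subdigraphs differs from
the number of odd ones. -/
def IsAT (D : Finset (V × V)) : Prop :=
  ((eulerianSubs D).filter fun H => Even H.card).card ≠
    ((eulerianSubs D).filter fun H => Odd H.card).card

/-- `D` is an orientation of the graph `G`: every arc is an edge of `G`,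
and each edge of `G` gets exactly one direction. -/
def IsOrientation (G : SimpleGraph V) (D : Finset (V × V)) : Prop :=
  (∀ a ∈ D, G.Adj a.1 a.2) ∧ ∀ u v : V, G.Adj u v → ((u, v) ∈ D ↔ (v, u) ∉ D)

/-- `D` contains a directed closed walk, equivalently a directed cycle. -/
def HasDirCycle (D : Finset (V × V)) : Prop :=
  ∃ (a : V) (l : List V), List.Chain (fun u v => (u, v) ∈ D) a (l ++ [a])

/-- Outerplanar: the vertices can be placed at distinct positions on a circle so that
all edges are pairwise noncrossing chords. -/
def Outerplanar (G : SimpleGraph V) : Prop :=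
  ∃ p : V → ℕ, Function.Injective p ∧ ∀ a b c d : V, G.Adj a b → G.Adj c d →
    ¬ (p a < p c ∧ p c < p b ∧ p b < p d)

/-- 2-connected: at least 3 vertices, connected, and deleting any vertex leaves it connected. -/
def TwoConnected (G : SimpleGraph V) : Prop :=
  3 ≤ Fintype.card V ∧ G.Connected ∧ ∀ v : V, (SimpleGraph.induce {w | w ≠ v} G).Connected

/-- `G` is a cycle: connected and 2-regular. -/
def IsCycleGraph (G : SimpleGraph V) [DecidableRel G.Adj] : Prop :=
  G.Connected ∧ ∀ v, G.degree v = 2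

/-- The arcs of a path/walk given by a list of vertices. -/
def pathArcs (l : List V) : Finset (V × V) := (l.zip l.tail).toFinset

/-- Weighted out-degree. -/
def wOutDeg (D : Finset (V × V)) (w : V × V → ℕ) (v : V) : ℕ :=
  ∑ a ∈ D.filter (fun a => a.1 = v), w a

/-- Weighted in-degree. -/
def wInDeg (D : Finset (V × V)) (w : V × V → ℕ) (v : V) : ℕ :=
  ∑ a ∈ D.filter (fun a => a.2 = v), w a

/-- Weighted Eulerian subdigraph. -/
def IsWEulerian (H : Finset (V × V)) (w : V × V → ℕ) : Prop :=
  ∀ v, wOutDeg H w v = wInDeg H w v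


section Aux
set_option linter.unusedSectionVars false
set_option linter.unusedVariables false

/-- Noncrossing edge sets over `S` have at most `2|S| - 3` edges (when `|S| ≥ 2`). -/
lemma lemA : ∀ (n : ℕ) (S : Finset ℕ) (E : Finset (ℕ × ℕ)), S.card ≤ n → 2 ≤ S.card →
    (∀ e ∈ E, e.1 ∈ S ∧ e.2 ∈ S ∧ e.1 < e.2) →
    (∀ e ∈ E, ∀ f ∈ E, ¬(e.1 < f.1 ∧ f.1 < e.2 ∧ e.2 < f.2)) →
    E.card + 3 ≤ 2 * S.card := by
  intro n
  induction n with
  | zero => intro S E h h2 _ _; omega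
  | succ n ih =>
    intro S E hSn hS2 hE hX
    by_cases hS : S.card = 2
    · obtain ⟨x, y, hxy, rfl⟩ := Finset.card_eq_two.mp hS
      have hle : E.card ≤ 1 := by
        apply Finset.card_le_one.mpr
        intro a ha b hb
        obtain ⟨h1, h2, h3⟩ := hE a ha
        obtain ⟨h4, h5, h6⟩ := hE b hb
        simp only [Finset.mem_insert, Finset.mem_singleton] at h1 h2 h4 h5
        have : a.1 = b.1 ∧ a.2 = b.2 := by
          rcases h1 with rfl | rfl <;> rcases h2 with h2 | h2 <;>
            rcases h4 with h4 | h4 <;> rcases h5 with h5 | h5 <;> omega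
        exact Prod.ext this.1 this.2
      omega
    · have hS3 : 3 ≤ S.card := by omega
      have hSne : S.Nonempty := Finset.card_pos.mp (by omega)
      set m := S.max' hSne with hm
      have hmS : m ∈ S := S.max'_mem hSne
      have hmax : ∀ x ∈ S, x ≤ m := fun x hx => S.le_max' x hx
      set Em := E.filter (fun e => e.2 = m) with hEmdef
      set E' := E.filter (fun e => ¬ e.2 = m) with hE'
      have hEsplit : Em.card + E'.card = E.card :=
        Finset.card_filter_add_card_filter_not _
      by_cases ht : Em.card ≤ 2
      · -- remove the max vertex, it has ≤ 2 incident edges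
        set S' := S.erase m with hS'
        have hS'card : S'.card = S.card - 1 := Finset.card_erase_of_mem hmS
        have hE'cond : ∀ e ∈ E', e.1 ∈ S' ∧ e.2 ∈ S' ∧ e.1 < e.2 := by
          intro e he
          simp only [hE', Finset.mem_filter] at he
          obtain ⟨h1, h2, h3⟩ := hE e he.1
          refine ⟨Finset.mem_erase.mpr ⟨?_, h1⟩, Finset.mem_erase.mpr ⟨he.2, h2⟩, h3⟩
          intro h; exact absurd (hmax e.2 h2) (by omega)
        have := ih S' E' (by omega) (by omega) hE'cond
          (fun e he f hf => hX e (Finset.filter_subset _ _ he) f (Finset.filter_subset _ _ hf))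
        omega
      · -- the max vertex has ≥ 3 neighbours; split at the second largest one
        push_neg at ht
        set N := Em.image Prod.fst with hNdef
        have hNE : ∀ x ∈ N, (x, m) ∈ E ∧ x < m := by
          intro x hx
          rw [hNdef, Finset.mem_image] at hx
          obtain ⟨e, he, rfl⟩ := hx
          simp only [hEmdef, Finset.mem_filter] at he
          have h2 : e = (e.1, m) := Prod.ext rfl he.2
          refine ⟨by rw [← h2]; exact he.1, ?_⟩
          have := hE e he.1; omega
        have hNcard : N.card = Em.card := by
          apply Finset.card_image_of_injOn
          intro e he f hf hef
          simp only [hEmdef, Finset.mem_coe, Finset.mem_filter] at he hf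
          exact Prod.ext hef (he.2.trans hf.2.symm)
        have hN3 : 3 ≤ N.card := by omega
        have hNne : N.Nonempty := Finset.card_pos.mp (by omega)
        set amax := N.max' hNne with hamax
        set N' := N.erase amax with hN'
        have hN'card : N'.card = N.card - 1 := Finset.card_erase_of_mem (N.max'_mem hNne)
        have hN'ne : N'.Nonempty := Finset.card_pos.mp (by omega)
        set a := N'.max' hN'ne with ha
        have haN' : a ∈ N' := N'.max'_mem hN'ne
        have haN : a ∈ N := Finset.mem_of_mem_erase haN'
        have haamax : a < amax := by
          have h1 : a ≤ amax := N.le_max' a haN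
          have h2 : a ≠ amax := (Finset.mem_erase.mp haN').1
          omega
        have ham : (a, m) ∈ E ∧ a < m := hNE a haN
        have hamaxm : amax < m := (hNE amax (N.max'_mem hNne)).2
        have hamaxS : amax ∈ S := (hE _ (hNE amax (N.max'_mem hNne)).1).1
        have haS : a ∈ S := (hE _ ham.1).1
        -- a vertex strictly below a
        obtain ⟨n0, hn0⟩ : (N'.erase a).Nonempty := by
          apply Finset.card_pos.mp
          rw [Finset.card_erase_of_mem haN']; omega
        have hn0a : n0 < a := by
          have h1 : n0 ∈ N' := Finset.mem_of_mem_erase hn0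
          have h2 : n0 ≤ a := N'.le_max' n0 h1
          have h3 : n0 ≠ a := (Finset.mem_erase.mp hn0).1
          omega
        have hn0S : n0 ∈ S := (hE _ (hNE n0 (Finset.mem_of_mem_erase (Finset.mem_of_mem_erase hn0))).1).1
        -- split S at a
        set S1 := S.filter (fun x => a ≤ x) with hS1def
        set S2 := insert m (S.filter (fun x => x ≤ a)) with hS2def
        set E1 := E.filter (fun e => a ≤ e.1) with hE1def
        set E2 := E.filter (fun e => ¬ a ≤ e.1) with hE2def
        have hE12 : E1.card + E2.card = E.card :=
          Finset.card_filter_add_card_filter_not _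
        have hE1cond : ∀ e ∈ E1, e.1 ∈ S1 ∧ e.2 ∈ S1 ∧ e.1 < e.2 := by
          intro e he
          simp only [hE1def, Finset.mem_filter] at he
          obtain ⟨h1, h2, h3⟩ := hE e he.1
          exact ⟨Finset.mem_filter.mpr ⟨h1, he.2⟩,
            Finset.mem_filter.mpr ⟨h2, by omega⟩, h3⟩
        have hamE2 : (a, m) ∉ E2 := by
          simp only [hE2def, Finset.mem_filter]; intro h; exact h.2 le_rfl
        have hE2cond : ∀ e ∈ insert (a, m) E2, e.1 ∈ S2 ∧ e.2 ∈ S2 ∧ e.1 < e.2 := by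
          intro e he
          rcases Finset.mem_insert.mp he with rfl | he
          · exact ⟨Finset.mem_insert.mpr (Or.inr (Finset.mem_filter.mpr ⟨haS, le_rfl⟩)),
              Finset.mem_insert_self _ _, ham.2⟩
          · simp only [hE2def, Finset.mem_filter] at he
            obtain ⟨h1, h2, h3⟩ := hE e he.1
            have he2 : e.2 ≤ a ∨ e.2 = m := by
              by_contra hcon
              push_neg at hcon
              have hlt : e.2 < m := lt_of_le_of_ne (hmax e.2 h2) hcon.2
              exact hX e he.1 (a, m) ham.1 ⟨by omega, by omega, hlt⟩
            refine ⟨Finset.mem_insert.mpr (Or.inr (Finset.mem_filter.mpr ⟨h1, by omega⟩)), ?_, h3⟩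
            rcases he2 with h | h
            · exact Finset.mem_insert.mpr (Or.inr (Finset.mem_filter.mpr ⟨h2, h⟩))
            · exact Finset.mem_insert.mpr (Or.inl h)
        have hsub2 : ∀ e ∈ insert (a, m) E2, e ∈ E := by
          intro e he
          rcases Finset.mem_insert.mp he with rfl | he
          · exact ham.1
          · exact Finset.filter_subset _ _ he
        -- cardinalities
        have hS1a : a ∈ S1 := Finset.mem_filter.mpr ⟨haS, le_rfl⟩
        have hS1m : m ∈ S1 := Finset.mem_filter.mpr ⟨hmS, by omega⟩
        have hS1card : 2 ≤ S1.card := Finset.one_lt_card.mpr ⟨a, hS1a, m, hS1m, by omega⟩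
        have hS1lt : S1.card < S.card := by
          apply Finset.card_lt_card
          constructor
          · exact Finset.filter_subset _ _
          · intro hsub
            have := Finset.mem_filter.mp (hsub hn0S)
            omega
        have hS2sub : S2 ⊆ S := by
          intro x hx
          rcases Finset.mem_insert.mp hx with rfl | hx
          · exact hmS
          · exact (Finset.mem_filter.mp hx).1
        have hS2a : a ∈ S2 := Finset.mem_insert.mpr (Or.inr (Finset.mem_filter.mpr ⟨haS, le_rfl⟩))
        have hS2m : m ∈ S2 := Finset.mem_insert_self _ _
        have hS2card : 2 ≤ S2.card := Finset.one_lt_card.mpr ⟨a, hS2a, m, hS2m, by omega⟩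
        have hS2lt : S2.card < S.card := by
          apply Finset.card_lt_card
          constructor
          · exact hS2sub
          · intro hsub
            have := hsub hamaxS
            rcases Finset.mem_insert.mp this with h | h
            · omega
            · have := (Finset.mem_filter.mp h).2; omega
        have hsum : S1.card + S2.card ≤ S.card + 2 := by
          have h1 : S2.card ≤ (S.filter (fun x => x ≤ a)).card + 1 := Finset.card_insert_le _ _
          have h2 : (S1 ∪ S.filter (fun x => x ≤ a)).card + (S1 ∩ S.filter (fun x => x ≤ a)).card
              = S1.card + (S.filter (fun x => x ≤ a)).card :=
            Finset.card_union_add_card_inter _ _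
          have h3 : S1 ∪ S.filter (fun x => x ≤ a) = S := by
            ext x
            simp only [hS1def, Finset.mem_union, Finset.mem_filter]
            constructor
            · rintro (h | h) <;> exact h.1
            · intro h
              rcases le_total a x with hle | hle
              · exact Or.inl ⟨h, hle⟩
              · exact Or.inr ⟨h, hle⟩
          have h4 : S1 ∩ S.filter (fun x => x ≤ a) = {a} := by
            ext x
            simp only [hS1def, Finset.mem_inter, Finset.mem_filter, Finset.mem_singleton]
            constructor
            · intro h; omega
            · rintro rfl; exact ⟨⟨haS, le_rfl⟩, haS, le_rfl⟩
          rw [h3, h4, Finset.card_singleton] at h2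
          omega
        -- apply the induction hypothesis to both parts
        have h1 := ih S1 E1 (by omega) hS1card hE1cond
          (fun e he f hf => hX e (Finset.filter_subset _ _ he) f (Finset.filter_subset _ _ hf))
        have h2 := ih S2 (insert (a, m) E2) (by omega) hS2card hE2cond
          (fun e he f hf => hX e (hsub2 e he) f (hsub2 f hf))
        have hins : (insert (a, m) E2).card = E2.card + 1 := Finset.card_insert_of_notMem hamE2
        omega

lemma lemA' (S : Finset ℕ) (E : Finset (ℕ × ℕ))
    (hE : ∀ e ∈ E, e.1 ∈ S ∧ e.2 ∈ S ∧ e.1 < e.2)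
    (hX : ∀ e ∈ E, ∀ f ∈ E, ¬(e.1 < f.1 ∧ f.1 < e.2 ∧ e.2 < f.2)) :
    E.card ≤ 2 * S.card := by
  rcases le_or_gt S.card 1 with h | h
  · have hemp : E = ∅ := by
      rw [Finset.eq_empty_iff_forall_notMem]
      intro e he
      obtain ⟨h1, h2, h3⟩ := hE e he
      have : 1 < S.card := Finset.one_lt_card.mpr ⟨e.1, h1, e.2, h2, by omega⟩
      omega
    simp [hemp]
  · have := lemA S.card S E le_rfl (by omega) hE hX
    omega


lemma orient_bound (G : SimpleGraph V) (k : V → ℕ) (D : Finset (V × V))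
    (hD : IsOrientation G D) (hk : ∀ v, outDeg D v ≤ k v) (H : G.Subgraph) :
    H.edgeSet.toFinite.toFinset.card ≤ ∑ v ∈ H.verts.toFinite.toFinset, k v := by
  classical
  obtain ⟨hadj, huniq⟩ := hD
  set EH := H.edgeSet.toFinite.toFinset with hEH
  set VH := H.verts.toFinite.toFinset with hVH
  set D' := D.filter (fun a => s(a.1, a.2) ∈ EH) with hD'
  have himg : EH ⊆ D'.image (fun a => s(a.1, a.2)) := by
    intro e he
    induction e with
    | h u v =>
      have hHadj : H.Adj u v := by
        rw [hEH, Set.Finite.mem_toFinset, SimpleGraph.Subgraph.mem_edgeSet] at he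
        exact he
      have hGadj : G.Adj u v := H.adj_sub hHadj
      rw [Finset.mem_image]
      by_cases hc : (u, v) ∈ D
      · exact ⟨(u, v), Finset.mem_filter.mpr ⟨hc, he⟩, rfl⟩
      · have : (v, u) ∈ D := (huniq v u hGadj.symm).mpr hc
        refine ⟨(v, u), Finset.mem_filter.mpr ⟨this, ?_⟩, Sym2.eq_swap⟩
        rwa [Sym2.eq_swap]
  have h1 : EH.card ≤ D'.card :=
    le_trans (Finset.card_le_card himg) (Finset.card_image_le)
  have h2 : D' ⊆ D.filter (fun a => a.1 ∈ VH) := by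
    intro a ha
    rw [hD', Finset.mem_filter] at ha
    refine Finset.mem_filter.mpr ⟨ha.1, ?_⟩
    rw [hEH, Set.Finite.mem_toFinset, SimpleGraph.Subgraph.mem_edgeSet] at ha
    rw [hVH, Set.Finite.mem_toFinset]
    exact ha.2.fst_mem
  have h3 : (D.filter (fun a => a.1 ∈ VH)).card = ∑ v ∈ VH, (D.filter (fun a => a.1 = v)).card := by
    rw [Finset.card_eq_sum_card_fiberwise (f := Prod.fst) (s := D.filter (fun a => a.1 ∈ VH)) (t := VH)
      (fun a ha => (Finset.mem_filter.mp ha).2)]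
    refine Finset.sum_congr rfl (fun v hv => ?_)
    congr 1
    ext a
    simp only [Finset.mem_filter]
    constructor
    · rintro ⟨⟨h1, _⟩, h2⟩; exact ⟨h1, h2⟩
    · rintro ⟨h1, h2⟩; exact ⟨⟨h1, h2 ▸ hv⟩, h2⟩
  calc EH.card ≤ D'.card := h1
    _ ≤ (D.filter (fun a => a.1 ∈ VH)).card := Finset.card_le_card h2
    _ = ∑ v ∈ VH, (D.filter (fun a => a.1 = v)).card := h3
    _ ≤ ∑ v ∈ VH, k v := Finset.sum_le_sum (fun v _ => hk v)

lemma orient_exists (G : SimpleGraph V) (k : V → ℕ)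
    (hcond : ∀ H : G.Subgraph, H.edgeSet.toFinite.toFinset.card ≤
      ∑ v ∈ H.verts.toFinite.toFinset, k v) :
    ∃ D : Finset (V × V), IsOrientation G D ∧ ∀ v, outDeg D v ≤ k v := by
  classical
  set t : G.edgeSet → Finset (V × ℕ) :=
    fun e => (Finset.univ.filter (fun v => v ∈ (e : Sym2 V))).biUnion
      (fun v => (Finset.range (k v)).image (fun i => (v, i))) with ht
  have hall : ∀ s : Finset G.edgeSet, s.card ≤ (s.biUnion t).card := by
    intro s
    set Hs : G.Subgraph :=
      { verts := {v | ∃ e ∈ s, v ∈ (e : Sym2 V)}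
        Adj := fun u v => G.Adj u v ∧ ∃ h : s(u, v) ∈ G.edgeSet, (⟨s(u, v), h⟩ : G.edgeSet) ∈ s
        adj_sub := fun h => h.1
        edge_vert := by
          rintro u v ⟨h1, h2, h3⟩
          exact ⟨⟨s(u, v), h2⟩, h3, Sym2.mem_mk_left u v⟩
        symm := by
          refine ⟨?_⟩
          rintro u v ⟨h1, h2, h3⟩
          refine ⟨h1.symm, ?_⟩
          rw [Sym2.eq_swap]
          exact ⟨h2, h3⟩ } with hHs
    have hedges : Hs.edgeSet.toFinite.toFinset = s.image (Subtype.val : G.edgeSet → Sym2 V) := by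
      ext e
      induction e with
      | h u v =>
        rw [Set.Finite.mem_toFinset, SimpleGraph.Subgraph.mem_edgeSet, Finset.mem_image]
        constructor
        · rintro ⟨h1, h2, h3⟩
          exact ⟨⟨s(u, v), h2⟩, h3, rfl⟩
        · rintro ⟨x, hx, hval⟩
          have hx2 : s(u, v) ∈ G.edgeSet := hval ▸ x.2
          refine ⟨hx2, hx2, ?_⟩
          have : x = ⟨s(u, v), hx2⟩ := Subtype.ext hval
          rwa [← this]
    have hverts : Hs.verts.toFinite.toFinset
        = s.biUnion (fun e => Finset.univ.filter (fun v => v ∈ (e : Sym2 V))) := by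
      ext v
      rw [Set.Finite.mem_toFinset, Finset.mem_biUnion]
      simp only [hHs, Set.mem_setOf_eq, Finset.mem_filter, Finset.mem_univ, true_and]
    have hcard1 : (s.image (Subtype.val : G.edgeSet → Sym2 V)).card = s.card :=
      Finset.card_image_of_injective _ Subtype.val_injective
    have hbu : s.biUnion t
        = (s.biUnion (fun e => Finset.univ.filter (fun v => v ∈ (e : Sym2 V)))).biUnion
          (fun v => (Finset.range (k v)).image (fun i => (v, i))) := by
      rw [Finset.biUnion_biUnion]
    have hcard2 : ((s.biUnion (fun e => Finset.univ.filter (fun v => v ∈ (e : Sym2 V)))).biUnion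
          (fun v => (Finset.range (k v)).image (fun i => (v, i)))).card
        = ∑ v ∈ s.biUnion (fun e => Finset.univ.filter (fun v => v ∈ (e : Sym2 V))),
            ((Finset.range (k v)).image (fun i => (v, i))).card := by
      apply Finset.card_biUnion
      intro x _ y _ hxy
      apply Finset.disjoint_left.mpr
      rintro ⟨v, i⟩ hv hw
      rw [Finset.mem_image] at hv hw
      obtain ⟨i1, _, h1⟩ := hv
      obtain ⟨i2, _, h2⟩ := hw
      exact hxy ((Prod.ext_iff.mp h1).1.trans (Prod.ext_iff.mp h2).1.symm)
    have hcard3 : ∀ v : V, ((Finset.range (k v)).image (fun i => (v, i))).card = k v := by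
      intro v
      rw [Finset.card_image_of_injective _ (fun a b h => (Prod.ext_iff.mp h).2),
        Finset.card_range]
    have := hcond Hs
    rw [hedges, hverts, hcard1] at this
    rw [hbu, hcard2]
    calc s.card ≤ ∑ v ∈ _, k v := this
      _ = _ := (Finset.sum_congr rfl (fun v _ => (hcard3 v).symm))
  obtain ⟨f, hfinj, hf⟩ := (Finset.all_card_le_biUnion_card_iff_exists_injective t).mp hall
  have hmem : ∀ e : G.edgeSet, (f e).1 ∈ (e : Sym2 V) ∧ (f e).2 < k (f e).1 := by
    intro e
    have := hf e
    rw [ht] at this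
    simp only [Finset.mem_biUnion, Finset.mem_filter, Finset.mem_univ, true_and,
      Finset.mem_image, Finset.mem_range] at this
    obtain ⟨v, hv, i, hi, hfi⟩ := this
    rw [← hfi]
    exact ⟨hv, hi⟩
  set arc : G.edgeSet → V × V := fun e => ((f e).1, Sym2.Mem.other' (hmem e).1) with harc
  have hedge : ∀ e : G.edgeSet, s((arc e).1, (arc e).2) = (e : Sym2 V) :=
    fun e => Sym2.other_spec' (hmem e).1
  have hadjarc : ∀ e : G.edgeSet, G.Adj (arc e).1 (arc e).2 := by
    intro e
    rw [← SimpleGraph.mem_edgeSet, hedge e]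
    exact e.2
  haveI : Fintype G.edgeSet := Fintype.ofFinite _
  refine ⟨Finset.univ.image arc, ⟨?_, ?_⟩, ?_⟩
  · intro a ha
    rw [Finset.mem_image] at ha
    obtain ⟨e, _, rfl⟩ := ha
    exact hadjarc e
  · intro u v huv
    have key : ∀ e : G.edgeSet, ∀ x y : V, arc e = (x, y) → (e : Sym2 V) = s(x, y) := by
      intro e x y hxy
      rw [← hedge e, hxy]
    constructor
    · intro h1 h2
      rw [Finset.mem_image] at h1 h2
      obtain ⟨e, _, he⟩ := h1
      obtain ⟨e', _, he'⟩ := h2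
      have h3 : (e : Sym2 V) = s(u, v) := key e u v he
      have h4 : (e' : Sym2 V) = s(u, v) := (key e' v u he').trans Sym2.eq_swap
      have h5 : e = e' := Subtype.ext (h3.trans h4.symm)
      rw [h5, he'] at he
      have hvu : v = u := by simpa using congrArg Prod.fst he
      exact G.loopless.irrefl u (hvu ▸ huv)
    · intro h1
      set e : G.edgeSet := ⟨s(u, v), (SimpleGraph.mem_edgeSet G).mpr huv⟩ with he
      have h2 : s((arc e).1, (arc e).2) = s(u, v) := hedge e
      rw [Sym2.eq_iff] at h2
      rcases h2 with ⟨h3, h4⟩ | ⟨h3, h4⟩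
      · rw [Finset.mem_image]
        exact ⟨e, Finset.mem_univ e, Prod.ext h3 h4⟩
      · exfalso
        apply h1
        rw [Finset.mem_image]
        exact ⟨e, Finset.mem_univ e, Prod.ext h3 h4⟩
  · intro v
    unfold outDeg
    have hsub : (Finset.univ.image arc).filter (fun a => a.1 = v)
        ⊆ (Finset.univ.filter (fun e : G.edgeSet => (f e).1 = v)).image arc := by
      intro a ha
      rw [Finset.mem_filter, Finset.mem_image] at ha
      obtain ⟨⟨e, _, rfl⟩, h2⟩ := ha
      rw [Finset.mem_image]
      exact ⟨e, Finset.mem_filter.mpr ⟨Finset.mem_univ e, h2⟩, rfl⟩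
    calc ((Finset.univ.image arc).filter (fun a => a.1 = v)).card
        ≤ ((Finset.univ.filter (fun e : G.edgeSet => (f e).1 = v)).image arc).card :=
          Finset.card_le_card hsub
      _ ≤ (Finset.univ.filter (fun e : G.edgeSet => (f e).1 = v)).card :=
          Finset.card_image_le
      _ ≤ (Finset.range (k v)).card := by
          apply Finset.card_le_card_of_injOn (fun e => (f e).2)
          · intro e he
            rw [Finset.mem_coe, Finset.mem_filter] at he
            rw [Finset.mem_coe, Finset.mem_range, ← he.2]
            exact (hmem e).2
          · intro e he e' he' hee
            rw [Finset.mem_coe, Finset.mem_filter] at he he'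
            apply hfinj
            exact Prod.ext (he.2.trans he'.2.symm) hee
      _ = k v := Finset.card_range _

lemma outer_bound (G : SimpleGraph V) (hout : Outerplanar G) (H : G.Subgraph) :
    H.edgeSet.toFinite.toFinset.card ≤ ∑ v ∈ H.verts.toFinite.toFinset, 2 := by
  classical
  obtain ⟨p, hinj, hcross⟩ := hout
  set EH := H.edgeSet.toFinite.toFinset with hEH
  set VH := H.verts.toFinite.toFinset with hVH
  set q : Sym2 V → ℕ × ℕ := Sym2.lift ⟨fun a b => (min (p a) (p b), max (p a) (p b)),
    fun a b => by simp [min_comm, max_comm]⟩ with hq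
  set E := EH.image q with hEdef
  set S := VH.image p with hSdef
  -- every element of E comes from an ordered adjacent pair with both ends in H.verts
  have hrep : ∀ x ∈ E, ∃ a b : V, G.Adj a b ∧ a ∈ H.verts ∧ b ∈ H.verts ∧
      p a < p b ∧ x = (p a, p b) := by
    intro x hx
    rw [hEdef, Finset.mem_image] at hx
    obtain ⟨e, he, rfl⟩ := hx
    rw [hEH, Set.Finite.mem_toFinset] at he
    induction e with
    | h a b =>
      have hadj : H.Adj a b := he
      have hG : G.Adj a b := H.adj_sub hadj
      have hne : p a ≠ p b := fun hpe => hG.ne (hinj hpe)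
      rcases lt_or_gt_of_ne hne with hlt | hlt
      · exact ⟨a, b, hG, hadj.fst_mem, hadj.snd_mem, hlt, by
          rw [hq]; simp only [Sym2.lift_mk, Prod.mk.injEq]; omega⟩
      · exact ⟨b, a, hG.symm, hadj.snd_mem, hadj.fst_mem, hlt, by
          rw [hq]; simp only [Sym2.lift_mk, Prod.mk.injEq]; omega⟩
  have hE1 : ∀ x ∈ E, x.1 ∈ S ∧ x.2 ∈ S ∧ x.1 < x.2 := by
    intro x hx
    obtain ⟨a, b, _, ha, hb, hlt, rfl⟩ := hrep x hx
    refine ⟨?_, ?_, hlt⟩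
    · exact Finset.mem_image.mpr ⟨a, (Set.Finite.mem_toFinset _).mpr ha, rfl⟩
    · exact Finset.mem_image.mpr ⟨b, (Set.Finite.mem_toFinset _).mpr hb, rfl⟩
  have hX1 : ∀ x ∈ E, ∀ y ∈ E, ¬(x.1 < y.1 ∧ y.1 < x.2 ∧ x.2 < y.2) := by
    intro x hx y hy hc
    obtain ⟨a, b, hab, _, _, _, rfl⟩ := hrep x hx
    obtain ⟨c, d, hcd, _, _, _, rfl⟩ := hrep y hy
    exact hcross a b c d hab hcd hc
  -- injectivity of q on EH
  have hinjq : Set.InjOn q EH := by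
    intro e he e' he' hqe
    rw [Finset.mem_coe, hEH, Set.Finite.mem_toFinset] at he he'
    induction e with
    | h a b =>
      induction e' with
      | h c d =>
        have hab : p a ≠ p b := fun hpe => (H.adj_sub he).ne (hinj hpe)
        have hcd : p c ≠ p d := fun hpe => (H.adj_sub he').ne (hinj hpe)
        rw [hq] at hqe
        simp only [Sym2.lift_mk] at hqe
        obtain ⟨h1, h2⟩ := Prod.ext_iff.mp hqe
        have : (p a = p c ∧ p b = p d) ∨ (p a = p d ∧ p b = p c) := by omega
        rcases this with ⟨h3, h4⟩ | ⟨h3, h4⟩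
        · rw [hinj h3, hinj h4]
        · rw [hinj h3, hinj h4, Sym2.eq_swap]
  have hcardE : E.card = EH.card := Finset.card_image_of_injOn hinjq
  have hcardS : S.card ≤ VH.card := Finset.card_image_le
  have := lemA' S E hE1 hX1
  have hsum : ∑ v ∈ VH, 2 = 2 * VH.card := by
    rw [Finset.sum_const, smul_eq_mul]; ring
  omega

end Aux

theorem stmt15 (G : SimpleGraph V) (k : V → ℕ) :
    ((∃ D : Finset (V × V), IsOrientation G D ∧ ∀ v, outDeg D v ≤ k v) ↔
      ∀ H : G.Subgraph, H.edgeSet.toFinite.toFinset.card ≤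
        ∑ v ∈ H.verts.toFinite.toFinset, k v) ∧
    (Outerplanar G → ∃ D : Finset (V × V), IsOrientation G D ∧ ∀ v, outDeg D v ≤ 2) := by
  constructor
  · constructor
    · rintro ⟨D, hD, hk⟩ H
      exact orient_bound G k D hD hk H
    · intro h
      exact orient_exists G k h
  · intro hout
    refine orient_exists G (fun _ => 2) ?_
    intro H
    exact outer_bound G hout H
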